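/- Let A be an n × n {0,1}-matrix with transitive directed graph that is not a cycle, and let r be the admissible word x_1 x_2 ... x_m x_1 from a simple return path at vertex x_1 (x_j ≠ x_1 for 1 < j ≤ m, A(x_m, x_1) = 1). Then the invariant open set V_r = {x ∈ X̄_A : r occurs in x} of the two-sided subshift X̄_A is a proper subset: there exists z ∈ X̄_A in which the word r does not occur. -/

import Mathlib

/-- The two-sided subshift of finite type of a `{0,1}`-matrix `A`. -/
def TwoShiftSpace (n : ℕ) (A : Fin n → Fin n → ℕ) : Set (ℤ → Fin n) :=
  {x | ∀ i : ℤ, A (x i) (x (i + 1)) = 1}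

/-- The two-sided shift map on `X̄_A`. -/
def twoShiftMap (n : ℕ) (A : Fin n → Fin n → ℕ) :
    TwoShiftSpace n A → TwoShiftSpace n A :=
  fun x => ⟨fun i => x.1 (i + 1), fun i => x.2 (i + 1)⟩

/-- The directed graph of `A` is transitive. -/
def GraphTransitive (n : ℕ) (A : Fin n → Fin n → ℕ) : Prop :=
  ∀ i j : Fin n, ∃ w : List (Fin n), w.Chain' (fun a b => A a b = 1) ∧
    w.head? = some i ∧ w.getLast? = some j

/-- `Gr(A)` is not a cycle: some vertex has at least two outgoing edges. -/
def NotACycle (n : ℕ) (A : Fin n → Fin n → ℕ) : Prop :=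
  ∃ i j k : Fin n, j ≠ k ∧ A i j = 1 ∧ A i k = 1

/-- The finite word `r` occurs in the two-sided sequence `x`. -/
def Occurs (n : ℕ) (r : List (Fin n)) (x : ℤ → Fin n) : Prop :=
  ∃ k : ℤ, ∀ j : Fin r.length, x (k + (j : ℤ)) = r.get j

/-- Truncate a path from `a` to `x₁` at the first hit of `x₁`. -/
theorem truncB {n : ℕ} (A : Fin n → Fin n → ℕ) (x₁ : Fin n) :
    ∀ q : List (Fin n), q.Chain' (fun a b => A a b = 1) → ∀ a : Fin n, a ≠ x₁ →
    q.head? = some a → q.getLast? = some x₁ →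
    ∃ q' : List (Fin n), q' ≠ [] ∧ q'.head? = some a ∧
      q'.Chain' (fun a b => A a b = 1) ∧ (∀ v ∈ q', v ≠ x₁) ∧
      ∃ e, q'.getLast? = some e ∧ A e x₁ = 1 := by
  intro q
  induction q with
  | nil => intro _ a _ h; simp at h
  | cons b rest ih =>
    intro hch a ha hhead hlastq
    simp only [List.head?_cons, Option.some.injEq] at hhead
    subst hhead
    match rest, hch, hlastq with
    | [], _, hlastq =>
      simp only [List.getLast?_singleton, Option.some.injEq] at hlastq
      exact absurd hlastq ha
    | c :: rest', hch, hlastq =>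
      rw [List.Chain', List.isChain_cons_cons] at hch
      obtain ⟨hbc, hch'⟩ := hch
      by_cases hc : c = x₁
      · refine ⟨[b], by simp, by simp, List.isChain_singleton _, by simpa using ha, b, by simp, ?_⟩
        rw [← hc]; exact hbc
      · rw [List.getLast?_cons_cons] at hlastq
        obtain ⟨q', hq'ne, hq'h, hq'c, hq'mem, e, hq'l, he⟩ :=
          ih hch' c hc (by simp) hlastq
        refine ⟨b :: q', by simp, by simp, ?_, ?_, e, ?_, he⟩
        · rw [List.Chain', List.isChain_cons]
          refine ⟨fun y hy => ?_, hq'c⟩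
          rw [hq'h] at hy; simp at hy; subst hy; exact hbc
        · intro v hv
          rcases List.mem_cons.mp hv with rfl | hv
          · exact ha
          · exact hq'mem v hv
        · match q', hq'ne, hq'l with
          | d :: q'', _, hq'l => rw [List.getLast?_cons_cons]; exact hq'l

theorem getLast?_of_suffix {α : Type*} {l₁ l : List α} (h : l₁ <:+ l) (hne : l₁ ≠ []) :
    l.getLast? = l₁.getLast? := by
  obtain ⟨s, rfl⟩ := h
  rw [List.getLast?_append]
  exact List.getLast?_isSome.mpr hne |> Option.isSome_iff_exists.mp |>.elim fun a ha => by simp [ha]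

/-- Truncate a path from `x₁` to `b` at the last hit of `x₁`. -/
theorem truncC {n : ℕ} (A : Fin n → Fin n → ℕ) (x₁ : Fin n) :
    ∀ N, ∀ q : List (Fin n), q.length ≤ N → q.Chain' (fun a b => A a b = 1) →
    q.head? = some x₁ → ∀ b, q.getLast? = some b →
    ∃ P : List (Fin n), P ≠ [] ∧ P.head? = some x₁ ∧
      P.Chain' (fun a b => A a b = 1) ∧ (∀ v ∈ P.tail, v ≠ x₁) ∧
      P.getLast? = some b := by
  intro N
  induction N with
  | zero =>
    intro q hlen _ hhead _ _
    rw [Nat.le_zero, List.length_eq_zero_iff] at hlen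
    subst hlen
    simp at hhead
  | succ N ih =>
    intro q hlen hch hhead b hlastq
    by_cases hgood : ∀ v ∈ q.tail, v ≠ x₁
    · exact ⟨q, by rintro rfl; simp at hhead, hhead, hch, hgood, hlastq⟩
    · push_neg at hgood
      obtain ⟨v, hvmem, hv⟩ := hgood
      rw [hv] at hvmem
      clear hv
      obtain ⟨l₁, l₂, htl⟩ := List.mem_iff_append.mp hvmem
      match q, hhead, hlastq, htl, hlen, hch with
      | a :: t, hhead, hlastq, htl, hlen, hch =>
        simp only [List.tail_cons] at htl
        subst htl
        have hsuf : (x₁ :: l₂) <:+ (a :: (l₁ ++ x₁ :: l₂)) := ⟨a :: l₁, by simp⟩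
        have hlen' : (x₁ :: l₂).length ≤ N := by
          simp only [List.length_cons, List.length_append, List.length_cons] at hlen ⊢
          omega
        refine ih (x₁ :: l₂) hlen' (hch.suffix hsuf) (by simp) b ?_
        rw [← getLast?_of_suffix hsuf (by simp)]
        exact hlastq


theorem head_get' {α : Type*} (l : List α) (a : α) (h : l.head? = some a)
    (h0 : 0 < l.length) : l.get ⟨0, h0⟩ = a := by
  cases l with
  | nil => simp at h
  | cons b t => simpa using h

theorem get_mem_tail' {α : Type*} (l : List α) (s : ℕ) (h : s + 1 < l.length) :
    l.get ⟨s + 1, h⟩ ∈ l.tail := by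
  cases l with
  | nil => simp at h
  | cons b t =>
    have h' : s < t.length := by simpa using h
    exact List.get_mem t ⟨s, h'⟩

/-- A closed walk at `x₁` with no internal `x₁`, different from `w`, gives a point of the
subshift avoiding `w ++ [x₁]`. -/
theorem cycle_avoid {n : ℕ} (A : Fin n → Fin n → ℕ) (x₁ : Fin n)
    (w : List (Fin n)) (hw : w ≠ []) (hhead : w.head? = some x₁)
    (htail : ∀ a ∈ w.tail, a ≠ x₁)
    (u : List (Fin n)) (hu : u ≠ []) (huh : u.head? = some x₁)
    (huc : u.Chain' (fun a b => A a b = 1)) (hut : ∀ v ∈ u.tail, v ≠ x₁)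
    (hue : A (u.getLast hu) x₁ = 1) (hne : u ≠ w) :
    ∃ z : (ℤ → Fin n), (∀ i : ℤ, A (z i) (z (i + 1)) = 1) ∧
      ¬ ∃ k : ℤ, ∀ j : Fin (w ++ [x₁]).length, z (k + (j : ℤ)) = (w ++ [x₁]).get j := by
  set p := u.length with hpdef
  have hp0 : 0 < p := List.length_pos_iff.mpr hu
  have hkey : ∀ t : ℤ, 0 ≤ t % (p : ℤ) ∧ t % (p : ℤ) < (p : ℤ) := fun t =>
    ⟨Int.emod_nonneg t (by exact_mod_cast hp0.ne'), Int.emod_lt_of_pos t (by exact_mod_cast hp0)⟩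
  have hidx : ∀ t : ℤ, (t % (p : ℤ)).toNat < p := by
    intro t; have := hkey t; omega
  set z : ℤ → Fin n := fun t => u.get ⟨(t % (p : ℤ)).toNat, hidx t⟩ with hzdef
  have hz_eq : ∀ (t : ℤ) (s : ℕ) (hs : s < p), (t % (p : ℤ)).toNat = s →
      z t = u.get ⟨s, hs⟩ := by
    intro t s hs h
    show u.get _ = _
    congr 1
    exact Fin.ext h
  -- basic facts about u
  have hu0 : u.get ⟨0, hp0⟩ = x₁ := head_get' u x₁ huh hp0
  have hutget : ∀ (s : ℕ) (hs : s < p), s ≠ 0 → u.get ⟨s, hs⟩ ≠ x₁ := by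
    intro s hs hs0
    match s, hs, hs0 with
    | s + 1, hs, _ => exact hut _ (get_mem_tail' u s hs)
  -- index arithmetic
  have hstep : ∀ t : ℤ, (t + 1) % (p : ℤ) = ((t % (p : ℤ)) + 1) % (p : ℤ) := by
    intro t
    conv_lhs => rw [← Int.emod_add_mul_ediv t (p : ℤ)]
    rw [add_right_comm, Int.add_mul_emod_self_left]
  -- z is in the shift space
  have hzmem : ∀ t : ℤ, A (z t) (z (t + 1)) = 1 := by
    intro t
    have h1 := hkey t
    have hzt : z t = u.get ⟨(t % (p : ℤ)).toNat, hidx t⟩ := rfl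
    set s : ℕ := (t % (p : ℤ)).toNat with hsdef
    by_cases hsp : s + 1 < p
    · have h2 : ((t + 1) % (p : ℤ)).toNat = s + 1 := by
        rw [hstep t]
        have he : (t % (p : ℤ)) + 1 = ((s + 1 : ℕ) : ℤ) := by push_cast; omega
        rw [he, Int.emod_eq_of_lt (by positivity) (by exact_mod_cast hsp)]
        omega
      rw [hzt, hz_eq (t + 1) (s + 1) hsp h2]
      exact List.isChain_iff_getElem.mp huc s (by omega)
    · have hsp' : s + 1 = p := by have := hidx t; omega
      have h2 : ((t + 1) % (p : ℤ)).toNat = 0 := by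
        rw [hstep t]
        have he : (t % (p : ℤ)) + 1 = (p : ℤ) := by omega
        rw [he, Int.emod_self]
        rfl
      have h3 : u.get ⟨s, hidx t⟩ = u.getLast hu := by
        rw [List.getLast_eq_getElem, List.get_eq_getElem]
        congr 1
        show s = _
        omega
      rw [hzt, hz_eq (t + 1) 0 hp0 h2, h3, hu0]
      exact hue
  -- characterization of positions of x₁
  have hx1iff : ∀ t : ℤ, z t = x₁ ↔ t % (p : ℤ) = 0 := by
    intro t
    constructor
    · intro h
      by_contra hmod
      exact hutget _ (hidx t) (by have := hkey t; omega) h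
    · intro h
      rw [hz_eq t 0 hp0 (by omega)]
      exact hu0
  refine ⟨z, hzmem, ?_⟩
  rintro ⟨k, hk⟩
  set m := w.length with hmdef
  have hm0 : 0 < m := List.length_pos_iff.mpr hw
  have hk' : ∀ (s : ℕ) (hs : s < m + 1), z (k + (s : ℤ)) = (w ++ [x₁]).get ⟨s, by simp; omega⟩ := by
    intro s hs
    have := hk ⟨s, by simp; omega⟩
    simpa using this
  have hrget_lt : ∀ (s : ℕ) (hs : s < m), (w ++ [x₁]).get ⟨s, by simp; omega⟩ = w.get ⟨s, hs⟩ := by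
    intro s hs
    rw [List.get_eq_getElem, List.get_eq_getElem]
    exact List.getElem_append_left hs
  have hrget_m : (w ++ [x₁]).get ⟨m, by simp [hmdef]⟩ = x₁ := by
    have : (w ++ [x₁]).get ⟨m, by simp [hmdef]⟩ = (w ++ [x₁])[m]'(by simp [hmdef]) := rfl
    rw [this, List.getElem_append_right (le_refl m)]
    simp
  have hw0 : w.get ⟨0, hm0⟩ = x₁ := head_get' w x₁ hhead hm0
  have hwget : ∀ (s : ℕ) (hs : s < m), s ≠ 0 → w.get ⟨s, hs⟩ ≠ x₁ := by
    intro s hs hs0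
    match s, hs, hs0 with
    | s + 1, hs, _ => exact htail _ (get_mem_tail' w s hs)
  -- k ≡ 0 mod p
  have hk0 : k % (p : ℤ) = 0 := by
    rw [← hx1iff]
    have := hk' 0 (by omega)
    rw [hrget_lt 0 hm0, hw0] at this
    simpa using this
  have hdk : (p : ℤ) ∣ k := Int.dvd_of_emod_eq_zero hk0
  have hkm : (k + (m : ℤ)) % (p : ℤ) = 0 := by
    rw [← hx1iff]
    have := hk' m (by omega)
    rw [hrget_m] at this
    exact this
  have hpm : (p : ℤ) ∣ (m : ℤ) := by
    have h2 : (p : ℤ) ∣ (k + m) := Int.dvd_of_emod_eq_zero hkm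
    simpa using dvd_sub h2 hdk
  have hpmnat : p ∣ m := by exact_mod_cast hpm
  -- no intermediate multiples of p
  have hmid : ∀ (s : ℕ), 0 < s → s < m → ¬ ((p : ℤ) ∣ (s : ℤ)) := by
    intro s hs1 hs2 hdvd
    have hzx : z (k + (s : ℤ)) ≠ x₁ := by
      have := hk' s (by omega)
      rw [hrget_lt s hs2] at this
      rw [this]
      exact hwget s hs2 (by omega)
    apply hzx
    rw [hx1iff]
    exact Int.emod_eq_zero_of_dvd (dvd_add hdk hdvd)
  have hpm' : p = m := by
    have hle := Nat.le_of_dvd hm0 hpmnat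
    rcases eq_or_lt_of_le hle with h | h
    · exact h
    · exact absurd (dvd_refl (p : ℤ)) (hmid p hp0 h)
  -- conclude u = w
  apply hne
  apply List.ext_get (by rw [← hpdef, ← hmdef, hpm'])
  intro s h1 h2
  have hsp : s < p := by rwa [← hpdef] at h1
  have hsm : s < m := by rwa [← hmdef] at h2
  have h3 : ((k + (s : ℤ)) % (p : ℤ)).toNat = s := by
    obtain ⟨c, rfl⟩ := hdk
    rw [add_comm ((p : ℤ) * c) (s : ℤ), Int.add_mul_emod_self_left,
      Int.emod_eq_of_lt (by positivity) (by exact_mod_cast hsp)]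
    omega
  have h4 := hk' s (by omega)
  rw [hrget_lt s hsm, hz_eq (k + (s : ℤ)) s hsp h3] at h4
  exact h4


theorem getLast_eq_of_getLast? {α : Type*} (l : List α) (h : l ≠ []) (e : α)
    (he : l.getLast? = some e) : l.getLast h = e := by
  rw [List.getLast?_eq_getLast h] at he
  exact Option.some_inj.mp he

/-- with `Gr(A)` transitive and not a cycle, and `r = x₁...x_m x₁` the
word coming from a simple return path at `x₁` (given as a list `w = x₁...x_m` with
`x_j ≠ x₁` for `j > 1` and `A(x_m, x₁) = 1`), the invariant open set
`V_r = {x ∈ X̄_A : r occurs in x}` is proper: some `z ∈ X̄_A` contains no occurrence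
of `r`. -/
theorem occurrence_set_proper (n : ℕ) (A : Fin n → Fin n → ℕ)
    (hA : ∀ i j, A i j = 0 ∨ A i j = 1) (htrans : GraphTransitive n A)
    (hnc : NotACycle n A) (x₁ : Fin n) (w : List (Fin n)) (hw : w ≠ [])
    (hhead : w.head? = some x₁) (hchain : w.Chain' (fun a b => A a b = 1))
    (htail : ∀ a ∈ w.tail, a ≠ x₁) (hlast : A (w.getLast hw) x₁ = 1) :
    ∃ z : TwoShiftSpace n A, ¬ Occurs n (w ++ [x₁]) z.1 := by
  obtain ⟨i, j, k, hjk, hij, hik⟩ := hnc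
  have hP : ∃ P : List (Fin n), P ≠ [] ∧ P.head? = some x₁ ∧
      P.Chain' (fun a b => A a b = 1) ∧ (∀ v ∈ P.tail, v ≠ x₁) ∧ P.getLast? = some i := by
    by_cases hi : i = x₁
    · exact ⟨[x₁], by simp, by simp, List.isChain_singleton _, by simp, by simp [hi]⟩
    · obtain ⟨q, hqc, hqh, hql⟩ := htrans x₁ i
      exact truncC A x₁ q.length q le_rfl hqc hqh i hql
  obtain ⟨P, hPne, hPh, hPc, hPt, hPl⟩ := hP
  match P, hPne, hPh, hPc, hPt, hPl with
  | a :: P', _, hPh, hPc, hPt, hPl =>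
  simp only [List.head?_cons, Option.some.injEq] at hPh
  subst a
  have build : ∀ v : Fin n, A i v = 1 → ∃ u : List (Fin n),
      (∃ hu : u ≠ [], u.head? = some x₁ ∧ u.Chain' (fun a b => A a b = 1) ∧
        (∀ b ∈ u.tail, b ≠ x₁) ∧ A (u.getLast hu) x₁ = 1) ∧
      ((v = x₁ ∧ u = x₁ :: P') ∨
        (v ≠ x₁ ∧ ∃ q, q ≠ [] ∧ q.head? = some v ∧ u = (x₁ :: P') ++ q)) := by
    intro v hv
    by_cases hvx : v = x₁
    · refine ⟨x₁ :: P', ⟨by simp, by simp, hPc, by simpa using hPt, ?_⟩, Or.inl ⟨hvx, rfl⟩⟩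
      rw [getLast_eq_of_getLast? _ (by simp) i hPl]
      rw [hvx] at hv
      exact hv
    · obtain ⟨q0, hq0c, hq0h, hq0l⟩ := htrans v x₁
      obtain ⟨q, hqne, hqh, hqc, hqmem, e, hql, he⟩ := truncB A x₁ q0 hq0c v hvx hq0h hq0l
      have hlastu : ((x₁ :: P') ++ q).getLast? = q.getLast? :=
        getLast?_of_suffix ⟨x₁ :: P', rfl⟩ hqne
      refine ⟨(x₁ :: P') ++ q, ⟨by simp, by simp, ?_, ?_, ?_⟩,
        Or.inr ⟨hvx, q, hqne, hqh, rfl⟩⟩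
      · refine List.IsChain.append hPc hqc ?_
        intro x hx y hy
        have hx' : x = i := by
          rw [hPl] at hx
          simpa [eq_comm] using hx
        have hy' : y = v := by
          rw [hqh] at hy
          simpa [eq_comm] using hy
        rw [hx', hy']
        exact hv
      · intro b hb
        simp only [List.cons_append, List.tail_cons] at hb
        rcases List.mem_append.mp hb with hb | hb
        · exact hPt b (by simpa using hb)
        · exact hqmem b hb
      · rw [getLast_eq_of_getLast? _ (by simp) e (hlastu.trans hql)]
        exact he
  obtain ⟨uj, hujgood, hujcase⟩ := build j hij
  obtain ⟨uk, hukgood, hukcase⟩ := build k hik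
  have hdiff : uj ≠ uk := by
    rcases hujcase with ⟨hjx, hujP⟩ | ⟨hjx, qj, hqjne, hqjh, hujP⟩ <;>
      rcases hukcase with ⟨hkx, hukP⟩ | ⟨hkx, qk, hqkne, hqkh, hukP⟩
    · exact absurd (hjx.trans hkx.symm) hjk
    · intro h
      rw [hujP, hukP] at h
      have := congrArg List.length h
      simp only [List.length_append, List.length_cons] at this
      have : qk.length = 0 := by omega
      exact hqkne (List.length_eq_zero_iff.mp this)
    · intro h
      rw [hujP, hukP] at h
      have := congrArg List.length h
      simp only [List.length_append, List.length_cons] at this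
      have : qj.length = 0 := by omega
      exact hqjne (List.length_eq_zero_iff.mp this)
    · intro h
      rw [hujP, hukP] at h
      have h2 : qj = qk := List.append_cancel_left h
      rw [h2, hqkh] at hqjh
      exact hjk (Option.some_inj.mp hqjh.symm)
  have key : ∀ u : List (Fin n),
      (∃ hu : u ≠ [], u.head? = some x₁ ∧ u.Chain' (fun a b => A a b = 1) ∧
        (∀ b ∈ u.tail, b ≠ x₁) ∧ A (u.getLast hu) x₁ = 1) → u ≠ w →
      ∃ z : TwoShiftSpace n A, ¬ Occurs n (w ++ [x₁]) z.1 := by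
    rintro u ⟨hu, huh, huc, hut, hue⟩ hne
    obtain ⟨z, hz1, hz2⟩ := cycle_avoid A x₁ w hw hhead htail u hu huh huc hut hue hne
    exact ⟨⟨z, hz1⟩, hz2⟩
  by_cases hjw : uj = w
  · exact key uk hukgood (fun h => hdiff (hjw.trans h.symm))
  · exact key uj hujgood hjw
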